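/- Let m = 2k with k ≥ 1 an integer, and fix y ∈ {0,1}^m with Σ y_i = k. For p ∈ [0,1]^m define the permutation-invariant likelihood L(p) = Σ_{σ ∈ S_m} Π_{i=1}^m p_{σ(i)}^{y_i} (1 - p_{σ(i)})^{1 - y_i} (the sum over all permutations σ of {1,...,m}). Then max_{p ∈ [0,1]^m} L(p) = (k!)^2, and the maximum is attained exactly at those vectors p having exactly k coordinates equal to 1 and exactly k coordinates equal to 0. In particular, the compound-decision mle of the empirical distribution of p_1,...,p_m is unique and puts mass 1/2 at 0 and mass 1/2 at 1. -/
import Mathlib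

open Finset

section Aux

lemma subtypeCongr_apply' {α : Type*} {p q : α → Prop} [DecidablePred p] [DecidablePred q]
    (e : {x // p x} ≃ {x // q x}) (f : {x // ¬ p x} ≃ {x // ¬ q x}) (a : α) :
    Equiv.subtypeCongr e f a = if h : p a then (e ⟨a, h⟩ : α) else (f ⟨a, h⟩ : α) := by
  by_cases h : p a <;> simp [Equiv.subtypeCongr, h]

lemma card_perm_image_eq {α : Type*} [Fintype α] [DecidableEq α] (A B : Finset α)
    (hAB : A.card = B.card) :
    (univ.filter fun σ : Equiv.Perm α => A.image σ = B).card
      = Nat.factorial A.card * Nat.factorial Aᶜ.card := by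
  have h1 : ∀ (σ : Equiv.Perm α), A.image σ = B → ∀ a, a ∈ A ↔ σ a ∈ B := by
    intro σ hσ a
    constructor
    · intro ha; rw [← hσ]; exact mem_image_of_mem σ ha
    · intro hb; rw [← hσ] at hb
      obtain ⟨a', ha', h⟩ := mem_image.1 hb
      exact σ.injective h ▸ ha'
  let Ψ : (({x // x ∈ A} ≃ {x // x ∈ B}) × ({x // x ∉ A} ≃ {x // x ∉ B})) ≃
      {σ : Equiv.Perm α // A.image σ = B} :=
  { toFun := fun ef => ⟨Equiv.subtypeCongr ef.1 ef.2, by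
      apply eq_of_subset_of_card_le
      · intro b hb
        obtain ⟨a, ha, rfl⟩ := mem_image.1 hb
        rw [subtypeCongr_apply', dif_pos ha]
        exact (ef.1 ⟨a, ha⟩).2
      · rw [card_image_of_injective _ (Equiv.injective _), hAB]⟩
    invFun := fun σ =>
      ⟨(σ : Equiv.Perm α).subtypeEquiv (h1 σ σ.2),
       (σ : Equiv.Perm α).subtypeEquiv (fun a => not_congr (h1 σ σ.2 a))⟩
    left_inv := by
      rintro ⟨e, f⟩
      ext a
      · simp [subtypeCongr_apply', a.2]
      · simp [subtypeCongr_apply', a.2]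
    right_inv := by
      rintro ⟨σ, hσ⟩
      rw [Subtype.ext_iff]
      ext a
      dsimp only
      rw [subtypeCongr_apply']
      by_cases h : a ∈ A <;> simp [h] }
  have hcompl : Fintype.card {x // x ∉ A} = Aᶜ.card := by
    rw [Fintype.card_subtype]
    congr 1
    ext x; simp
  have hcompl' : Fintype.card {x // x ∉ B} = Bᶜ.card := by
    rw [Fintype.card_subtype]
    congr 1
    ext x; simp
  have e1 : {x // x ∈ A} ≃ {x // x ∈ B} :=
    Fintype.equivOfCardEq (by rw [Fintype.card_coe, Fintype.card_coe, hAB])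
  have e2 : {x // x ∉ A} ≃ {x // x ∉ B} :=
    Fintype.equivOfCardEq (by rw [hcompl, hcompl', card_compl, card_compl, hAB])
  calc (univ.filter fun σ : Equiv.Perm α => A.image σ = B).card
      = Fintype.card {σ : Equiv.Perm α // A.image σ = B} := (Fintype.card_subtype _).symm
    _ = Fintype.card (({x // x ∈ A} ≃ {x // x ∈ B}) × ({x // x ∉ A} ≃ {x // x ∉ B})) :=
        (Fintype.card_congr Ψ).symm
    _ = Nat.factorial A.card * Nat.factorial Aᶜ.card := by
        rw [Fintype.card_prod, Fintype.card_equiv e1, Fintype.card_equiv e2,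
          Fintype.card_coe, hcompl]

lemma image_perm_compl' {α : Type*} [Fintype α] [DecidableEq α]
    (σ : Equiv.Perm α) (s : Finset α) : sᶜ.image σ = (s.image σ)ᶜ := by
  ext j
  simp only [mem_compl, mem_image]
  constructor
  · rintro ⟨a, ha, rfl⟩ ⟨b, hb, hba⟩
    exact ha (σ.injective hba ▸ hb)
  · intro hj
    exact ⟨σ.symm j, fun hs => hj ⟨σ.symm j, hs, σ.apply_symm_apply j⟩, σ.apply_symm_apply j⟩

open scoped Classical in
/-- The term of `σ` equals `W p (Y1.image σ)`. -/
lemma term_eq_W {m : ℕ} (y : Fin m → ℕ) (hy : ∀ i, y i = 0 ∨ y i = 1) (p : Fin m → ℝ)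
    (σ : Equiv.Perm (Fin m)) :
    ∏ i, (p (σ i)) ^ (y i) * (1 - p (σ i)) ^ (1 - y i)
      = (∏ j ∈ (univ.filter fun i => y i = 1).image σ, p j) *
        ∏ j ∈ univ \ (univ.filter fun i => y i = 1).image σ, (1 - p j) := by
  rw [← compl_eq_univ_sdiff]
  rw [← prod_filter_mul_prod_filter_not univ (fun i => y i = 1)
    (fun i => (p (σ i)) ^ (y i) * (1 - p (σ i)) ^ (1 - y i))]
  congr 1
  · rw [Finset.prod_image (fun a _ b _ h => σ.injective h)]
    refine prod_congr rfl fun i hi => ?_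
    rw [mem_filter] at hi
    rw [hi.2]
    ring
  · rw [← image_perm_compl', Finset.prod_image (fun a _ b _ h => σ.injective h)]
    have h2 : univ.filter (fun i => ¬ y i = 1) = (univ.filter fun i => y i = 1)ᶜ := by
      ext i; simp
    rw [h2]
    refine prod_congr rfl fun i hi => ?_
    rw [mem_compl, mem_filter] at hi
    have : y i = 0 := (hy i).resolve_right (fun h => hi ⟨mem_univ i, h⟩)
    rw [this]
    ring

open scoped Classical in
/-- Regrouping: the likelihood equals `k! * k!` times the sum over size-`k` subsets. -/
lemma L_eq_regroup (k : ℕ) (m : ℕ) (hm : m = 2 * k)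
    (y : Fin m → ℕ) (hy : ∀ i, y i = 0 ∨ y i = 1) (hsum : ∑ i, y i = k)
    (p : Fin m → ℝ) :
    (∑ σ : Equiv.Perm (Fin m), ∏ i, (p (σ i)) ^ (y i) * (1 - p (σ i)) ^ (1 - y i))
      = (Nat.factorial k * Nat.factorial k : ℝ) *
        ∑ S ∈ powersetCard k (univ : Finset (Fin m)),
          (∏ j ∈ S, p j) * ∏ j ∈ univ \ S, (1 - p j) := by
  set Y1 := univ.filter fun i => y i = 1 with hY1
  have hY1card : Y1.card = k := by
    have := sum_filter_add_sum_filter_not univ (fun i => y i = 1) y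
    rw [hsum] at this
    have h1 : ∑ i ∈ univ.filter (fun i => y i = 1), y i = Y1.card := by
      rw [card_eq_sum_ones]
      exact sum_congr rfl fun i hi => (mem_filter.1 hi).2
    have h2 : ∑ i ∈ univ.filter (fun i => ¬ y i = 1), y i = 0 := by
      refine sum_eq_zero fun i hi => ?_
      exact (hy i).resolve_right (mem_filter.1 hi).2
    rw [h1, h2] at this
    simpa using this
  have hmaps : ∀ σ ∈ (univ : Finset (Equiv.Perm (Fin m))),
      Y1.image σ ∈ powersetCard k (univ : Finset (Fin m)) := by
    intro σ _
    rw [mem_powersetCard_univ, card_image_of_injective _ σ.injective, hY1card]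
  rw [← Finset.sum_fiberwise_of_maps_to hmaps
    (fun σ => ∏ i, (p (σ i)) ^ (y i) * (1 - p (σ i)) ^ (1 - y i))]
  rw [mul_sum]
  refine sum_congr rfl fun S hS => ?_
  rw [mem_powersetCard_univ] at hS
  have hfib : ∀ σ ∈ univ.filter (fun σ : Equiv.Perm (Fin m) => Y1.image σ = S),
      (∏ i, (p (σ i)) ^ (y i) * (1 - p (σ i)) ^ (1 - y i))
        = (∏ j ∈ S, p j) * ∏ j ∈ univ \ S, (1 - p j) := by
    intro σ hσ
    rw [term_eq_W y hy p σ]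
    rw [(mem_filter.1 hσ).2]
  rw [Finset.sum_congr rfl hfib, Finset.sum_const, nsmul_eq_mul]
  congr 1
  have hc := card_perm_image_eq Y1 S (by rw [hY1card, hS])
  rw [Finset.filter_congr_decidable] at hc
  rw [Finset.filter_congr_decidable, hc, hY1card]
  have : Y1ᶜ.card = k := by
    rw [card_compl, hY1card, Fintype.card_fin, hm]
    omega
  rw [this]
  push_cast
  ring

/-- The full powerset sum is `1`. -/
lemma sum_W_powerset {m : ℕ} (p : Fin m → ℝ) :
    ∑ t ∈ (univ : Finset (Fin m)).powerset, (∏ j ∈ t, p j) * ∏ j ∈ univ \ t, (1 - p j)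
      = 1 := by
  rw [← Finset.prod_add]
  simp

end Aux

open scoped Classical in
/-- Compound-decision mle (Example 1): with `m = 2k` and data `y ∈ {0,1}^m`, `∑ y i = k`,
the permutation-invariant likelihood
`L(p) = ∑_{σ ∈ S_m} ∏ i, p_{σ(i)}^{y i} (1 - p_{σ(i)})^{1 - y i}`
on `[0,1]^m` has maximum value `(k!)^2`, attained exactly at the vectors `p` with exactly
`k` coordinates equal to `1` and exactly `k` coordinates equal to `0`; i.e. the mle of the
empirical distribution of `p_1,...,p_m` is unique, putting mass `1/2` at `0` and `1/2` at `1`. -/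
theorem cd_mle_two_point (k : ℕ) (hk : 1 ≤ k) (m : ℕ) (hm : m = 2 * k)
    (y : Fin m → ℕ) (hy : ∀ i, y i = 0 ∨ y i = 1) (hsum : ∑ i, y i = k) :
    (∀ p : Fin m → ℝ, (∀ i, p i ∈ Set.Icc (0 : ℝ) 1) →
        (∑ σ : Equiv.Perm (Fin m), ∏ i, (p (σ i)) ^ (y i) * (1 - p (σ i)) ^ (1 - y i))
          ≤ ((Nat.factorial k : ℝ)) ^ 2)
    ∧ (∃ p : Fin m → ℝ, (∀ i, p i ∈ Set.Icc (0 : ℝ) 1) ∧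
        (∑ σ : Equiv.Perm (Fin m), ∏ i, (p (σ i)) ^ (y i) * (1 - p (σ i)) ^ (1 - y i))
          = ((Nat.factorial k : ℝ)) ^ 2)
    ∧ (∀ p : Fin m → ℝ, (∀ i, p i ∈ Set.Icc (0 : ℝ) 1) →
        ((∑ σ : Equiv.Perm (Fin m), ∏ i, (p (σ i)) ^ (y i) * (1 - p (σ i)) ^ (1 - y i))
            = ((Nat.factorial k : ℝ)) ^ 2
          ↔ (Finset.univ.filter fun i => p i = 1).card = k
            ∧ (Finset.univ.filter fun i => p i = 0).card = k)) := by
  -- notation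
  set W : (Fin m → ℝ) → Finset (Fin m) → ℝ :=
    fun p S => (∏ j ∈ S, p j) * ∏ j ∈ univ \ S, (1 - p j) with hW
  set F : (Fin m → ℝ) → ℝ :=
    fun p => ∑ S ∈ powersetCard k (univ : Finset (Fin m)), W p S with hF
  have hL : ∀ p : Fin m → ℝ,
      (∑ σ : Equiv.Perm (Fin m), ∏ i, (p (σ i)) ^ (y i) * (1 - p (σ i)) ^ (1 - y i))
        = (Nat.factorial k * Nat.factorial k : ℝ) * F p :=
    fun p => L_eq_regroup k m hm y hy hsum p
  have hWnn : ∀ p : Fin m → ℝ, (∀ i, p i ∈ Set.Icc (0 : ℝ) 1) →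
      ∀ S : Finset (Fin m), 0 ≤ W p S := by
    intro p hp S
    refine mul_nonneg (prod_nonneg fun j _ => (hp j).1) (prod_nonneg fun j _ => ?_)
    linarith [(hp j).2]
  have hsub : powersetCard k (univ : Finset (Fin m)) ⊆ (univ : Finset (Fin m)).powerset := by
    intro S hS
    exact mem_powerset.2 (subset_univ S)
  -- complement sum
  have hsplit : ∀ p : Fin m → ℝ,
      (∑ t ∈ (univ : Finset (Fin m)).powerset \ powersetCard k univ, W p t) + F p = 1 := by
    intro p
    rw [hF]
    rw [Finset.sum_sdiff hsub, sum_W_powerset]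
  have hFle : ∀ p : Fin m → ℝ, (∀ i, p i ∈ Set.Icc (0 : ℝ) 1) → F p ≤ 1 := by
    intro p hp
    have := hsplit p
    have h0 : 0 ≤ ∑ t ∈ (univ : Finset (Fin m)).powerset \ powersetCard k univ, W p t :=
      sum_nonneg fun t _ => hWnn p hp t
    linarith
  -- F = 1 iff all off-k terms vanish
  have hF1iff : ∀ p : Fin m → ℝ, (∀ i, p i ∈ Set.Icc (0 : ℝ) 1) →
      (F p = 1 ↔ ∀ t ∈ (univ : Finset (Fin m)).powerset \ powersetCard k univ, W p t = 0) := by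
    intro p hp
    have := hsplit p
    constructor
    · intro h1
      have hz : ∑ t ∈ (univ : Finset (Fin m)).powerset \ powersetCard k univ, W p t = 0 := by
        linarith
      exact (sum_eq_zero_iff_of_nonneg fun t _ => hWnn p hp t).1 hz
    · intro hall
      have : ∑ t ∈ (univ : Finset (Fin m)).powerset \ powersetCard k univ, W p t = 0 :=
        sum_eq_zero hall
      linarith
  -- membership characterization of the sdiff set
  have hmemdiff : ∀ t : Finset (Fin m),
      t ∈ (univ : Finset (Fin m)).powerset \ powersetCard k univ ↔ t.card ≠ k := by
    intro t
    simp [Finset.mem_sdiff, mem_powersetCard_univ]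
  -- positivity of W p O whenever p ∈ [0,1] and O ⊆ ones, O ⊇ ones... we use ad hoc
  -- key equivalence: F p = 1 ↔ counts
  have hkey : ∀ p : Fin m → ℝ, (∀ i, p i ∈ Set.Icc (0 : ℝ) 1) →
      (F p = 1 ↔ (univ.filter fun i => p i = 1).card = k
        ∧ (univ.filter fun i => p i = 0).card = k) := by
    intro p hp
    set O := univ.filter fun i => p i = 1 with hO
    set Z := univ.filter fun i => p i = 0 with hZ
    have hOZdisj : Disjoint O Z := by
      rw [Finset.disjoint_left]
      intro a haO haZ
      rw [hO, mem_filter] at haO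
      rw [hZ, mem_filter] at haZ
      rw [haZ.2] at haO
      norm_num at haO
    rw [hF1iff p hp]
    constructor
    · intro hall
      -- W p O > 0, so O.card = k
      have hWO : ∀ t : Finset (Fin m), t ⊆ univ → (∀ j ∈ t, p j ≠ 0) → O ⊆ t → 0 < W p t := by
        intro t _ ht hOt
        by_cases hcase : ∀ j ∈ univ \ t, p j ≠ 1
        · refine mul_pos (prod_pos fun j hj => lt_of_le_of_ne (hp j).1 (Ne.symm (ht j hj)))
            (prod_pos fun j hj => ?_)
          have : p j < 1 := lt_of_le_of_ne (hp j).2 (hcase j hj)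
          linarith
        · push_neg at hcase
          obtain ⟨j, hj, hj1⟩ := hcase
          exfalso
          rw [Finset.mem_sdiff] at hj
          exact hj.2 (hOt (by rw [hO, mem_filter]; exact ⟨mem_univ j, hj1⟩))
      have hWO' : 0 < W p O := by
        refine hWO O (subset_univ O) (fun j hj => ?_) subset_rfl
        rw [hO, mem_filter] at hj
        rw [hj.2]; norm_num
      have hOcard : O.card = k := by
        by_contra hne
        have := hall O ((hmemdiff O).2 hne)
        rw [this] at hWO'
        exact lt_irrefl 0 hWO'
      refine ⟨hOcard, ?_⟩
      -- every j ∉ O has p j = 0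
      have hZall : ∀ j, j ∉ O → p j = 0 := by
        intro j0 hj0
        by_contra hpj0
        have hW' : 0 < W p (insert j0 O) := by
          refine hWO (insert j0 O) (subset_univ _) (fun j hj => ?_) (subset_insert _ _)
          rcases Finset.mem_insert.1 hj with rfl | hj
          · exact hpj0
          · rw [hO, mem_filter] at hj
            rw [hj.2]; norm_num
        have hcardne : (insert j0 O).card ≠ k := by
          rw [Finset.card_insert_of_notMem hj0, hOcard]
          omega
        have := hall _ ((hmemdiff _).2 hcardne)
        rw [this] at hW'
        exact lt_irrefl 0 hW'
      have hZeq : Z = univ \ O := by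
        ext j
        rw [Finset.mem_sdiff]
        constructor
        · intro hjZ
          exact ⟨mem_univ j, Finset.disjoint_right.1 hOZdisj hjZ⟩
        · intro ⟨_, hjO⟩
          rw [hZ, mem_filter]
          exact ⟨mem_univ j, hZall j hjO⟩
      rw [hZeq, Finset.card_sdiff_of_subset (subset_univ O), card_univ, Fintype.card_fin, hOcard, hm]
      omega
    · intro ⟨hOcard, hZcard⟩
      -- every coordinate is 0 or 1
      have hunion : O ∪ Z = univ := by
        apply Finset.eq_univ_of_card
        rw [Finset.card_union_of_disjoint hOZdisj, hOcard, hZcard, Fintype.card_fin, hm]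
        omega
      intro t ht
      rw [hmemdiff] at ht
      by_contra hWt
      have hprods := mul_ne_zero_iff.1 hWt
      have htO : t ⊆ O := by
        intro j hj
        have hne0 : p j ≠ 0 := prod_ne_zero_iff.1 hprods.1 j hj
        have : j ∈ O ∪ Z := hunion ▸ mem_univ j
        rcases Finset.mem_union.1 this with h | h
        · exact h
        · rw [hZ, mem_filter] at h
          exact absurd h.2 hne0
      have hOt : O ⊆ t := by
        intro j hj
        by_contra hjt
        have hjdiff : j ∈ univ \ t := Finset.mem_sdiff.2 ⟨mem_univ j, hjt⟩
        have hne : (1 : ℝ) - p j ≠ 0 := prod_ne_zero_iff.1 hprods.2 j hjdiff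
        rw [hO, mem_filter] at hj
        rw [hj.2] at hne
        norm_num at hne
      have : t = O := subset_antisymm htO hOt
      rw [this, hOcard] at ht
      exact ht rfl
  -- factorial positivity
  have hfacpos : (0 : ℝ) < (Nat.factorial k : ℝ) := by
    exact_mod_cast Nat.factorial_pos k
  have hsq : ((Nat.factorial k : ℝ)) ^ 2 = (Nat.factorial k * Nat.factorial k : ℝ) := by
    ring
  refine ⟨?_, ?_, ?_⟩
  · intro p hp
    rw [hL p, hsq]
    have := hFle p hp
    nlinarith
  · refine ⟨fun i => if y i = 1 then 1 else 0, ?_, ?_⟩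
    · intro i
      by_cases h : y i = 1 <;> simp [h]
    · rw [hL (fun i => if y i = 1 then (1:ℝ) else 0), hsq]
      have hcounts : ((univ.filter fun i => (if y i = 1 then (1:ℝ) else 0) = 1).card = k
          ∧ (univ.filter fun i => (if y i = 1 then (1:ℝ) else 0) = 0).card = k) := by
        constructor
        · have : (univ.filter fun i => (if y i = 1 then (1:ℝ) else 0) = 1)
              = univ.filter fun i => y i = 1 := by
            ext i
            by_cases h : y i = 1 <;> simp [h]
          rw [this]
          -- card of ones = k : same computation as in L_eq_regroup
          have hsum2 := sum_filter_add_sum_filter_not univ (fun i => y i = 1) y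
          rw [hsum] at hsum2
          have h1 : ∑ i ∈ univ.filter (fun i => y i = 1), y i
              = (univ.filter fun i => y i = 1).card := by
            rw [card_eq_sum_ones]
            exact sum_congr rfl fun i hi => (mem_filter.1 hi).2
          have h2 : ∑ i ∈ univ.filter (fun i => ¬ y i = 1), y i = 0 := by
            refine sum_eq_zero fun i hi => ?_
            exact (hy i).resolve_right (mem_filter.1 hi).2
          rw [h1, h2] at hsum2
          simpa using hsum2
        · have : (univ.filter fun i => (if y i = 1 then (1:ℝ) else 0) = 0)
              = univ.filter fun i => ¬ y i = 1 := by
            ext i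
            by_cases h : y i = 1 <;> simp [h]
          rw [this]
          have htot := Finset.card_filter_add_card_filter_not
            (s := (univ : Finset (Fin m))) (p := fun i => y i = 1)
          have hsum2 := sum_filter_add_sum_filter_not univ (fun i => y i = 1) y
          rw [hsum] at hsum2
          have h1 : ∑ i ∈ univ.filter (fun i => y i = 1), y i
              = (univ.filter fun i => y i = 1).card := by
            rw [card_eq_sum_ones]
            exact sum_congr rfl fun i hi => (mem_filter.1 hi).2
          have h2 : ∑ i ∈ univ.filter (fun i => ¬ y i = 1), y i = 0 := by
            refine sum_eq_zero fun i hi => ?_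
            exact (hy i).resolve_right (mem_filter.1 hi).2
          rw [h1, h2] at hsum2
          rw [card_univ, Fintype.card_fin] at htot
          omega
      have hF1 : F (fun i => if y i = 1 then (1:ℝ) else 0) = 1 := by
        refine (hkey _ ?_).2 hcounts
        intro i
        by_cases h : y i = 1 <;> simp [h]
      rw [hF1, mul_one]
  · intro p hp
    rw [hL p, hsq]
    have hne : (Nat.factorial k * Nat.factorial k : ℝ) ≠ 0 := by positivity
    constructor
    · intro h
      exact (hkey p hp).1 (mul_left_cancel₀ hne (h.trans (mul_one _).symm))
    · intro h
      rw [(hkey p hp).2 h, mul_one]
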